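/- The three Hamiltonians h₁ = 2p₁p₃+p₂²+2q₁p₂p₃+q₂p₃² + q₁⁵−4q₁³q₂+3q₁²q₃+3q₁q₂²−2q₂q₃ + cq₁, h₂ = 2q₁p₁p₃+2q₁p₂²+2p₁p₂+(q₁q₂−q₃)p₃²+2q₁²p₂p₃ + q₁⁴q₂−q₁³q₃−3q₁²q₂²+4q₁q₂q₃+q₂³−q₃² + cq₂, and h₃ = p₁²+2q₁p₁p₂+2q₂p₁p₃+q₁²p₂²+(q₂²−q₁q₃)p₃²+2(q₁q₂−q₃)p₂p₃ + q₁⁴q₃−3q₁²q₂q₃+2q₁q₃²+q₂²q₃ + cq₃ pairwise Poisson commute with respect to the canonical Poisson bracket in (q₁,q₂,q₃,p₁,p₂,p₃). -/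

import Mathlib

noncomputable def dQ1 (F : ℝ → ℝ → ℝ → ℝ → ℝ → ℝ → ℝ) (a b e u v w : ℝ) : ℝ :=
  deriv (fun x => F x b e u v w) a
noncomputable def dQ2 (F : ℝ → ℝ → ℝ → ℝ → ℝ → ℝ → ℝ) (a b e u v w : ℝ) : ℝ :=
  deriv (fun x => F a x e u v w) b
noncomputable def dQ3 (F : ℝ → ℝ → ℝ → ℝ → ℝ → ℝ → ℝ) (a b e u v w : ℝ) : ℝ :=
  deriv (fun x => F a b x u v w) e
noncomputable def dP1 (F : ℝ → ℝ → ℝ → ℝ → ℝ → ℝ → ℝ) (a b e u v w : ℝ) : ℝ :=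
  deriv (fun x => F a b e x v w) u
noncomputable def dP2 (F : ℝ → ℝ → ℝ → ℝ → ℝ → ℝ → ℝ) (a b e u v w : ℝ) : ℝ :=
  deriv (fun x => F a b e u x w) v
noncomputable def dP3 (F : ℝ → ℝ → ℝ → ℝ → ℝ → ℝ → ℝ) (a b e u v w : ℝ) : ℝ :=
  deriv (fun x => F a b e u v x) w

/-- Canonical Poisson bracket in (q₁,q₂,q₃,p₁,p₂,p₃). -/
noncomputable def pbracket (F G : ℝ → ℝ → ℝ → ℝ → ℝ → ℝ → ℝ) (a b e u v w : ℝ) : ℝ :=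
    dQ1 F a b e u v w * dP1 G a b e u v w - dP1 F a b e u v w * dQ1 G a b e u v w
  + dQ2 F a b e u v w * dP2 G a b e u v w - dP2 F a b e u v w * dQ2 G a b e u v w
  + dQ3 F a b e u v w * dP3 G a b e u v w - dP3 F a b e u v w * dQ3 G a b e u v w

lemma dp5 (f : ℝ → ℝ) (a0 a1 a2 a3 a4 a5 x : ℝ)
    (hf : f = fun t => a0 + a1*t + a2*t^2 + a3*t^3 + a4*t^4 + a5*t^5) :
    deriv f x = a1 + 2*a2*x + 3*a3*x^2 + 4*a4*x^3 + 5*a5*x^4 := by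
  have h : HasDerivAt f (a1 + 2*a2*x + 3*a3*x^2 + 4*a4*x^3 + 5*a5*x^4) x := by
    rw [hf]
    have h1 := (hasDerivAt_id x).const_mul a1
    have h2 := ((hasDerivAt_pow 2 x).const_mul a2)
    have h3 := ((hasDerivAt_pow 3 x).const_mul a3)
    have h4 := ((hasDerivAt_pow 4 x).const_mul a4)
    have h5 := ((hasDerivAt_pow 5 x).const_mul a5)
    have := (((((hasDerivAt_const x a0).fun_add h1).fun_add h2).fun_add h3).fun_add h4).fun_add h5
    refine this.congr_deriv ?_
    push_cast
    ring
  exact h.deriv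

theorem stmt5 (c : ℝ) (h1 h2 h3 : ℝ → ℝ → ℝ → ℝ → ℝ → ℝ → ℝ)
    (hh1 : h1 = fun q1 q2 q3 p1 p2 p3 =>
      2*p1*p3 + p2^2 + 2*q1*p2*p3 + q2*p3^2
      + q1^5 - 4*q1^3*q2 + 3*q1^2*q3 + 3*q1*q2^2 - 2*q2*q3 + c*q1)
    (hh2 : h2 = fun q1 q2 q3 p1 p2 p3 =>
      2*q1*p1*p3 + 2*q1*p2^2 + 2*p1*p2 + (q1*q2 - q3)*p3^2 + 2*q1^2*p2*p3
      + q1^4*q2 - q1^3*q3 - 3*q1^2*q2^2 + 4*q1*q2*q3 + q2^3 - q3^2 + c*q2)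
    (hh3 : h3 = fun q1 q2 q3 p1 p2 p3 =>
      p1^2 + 2*q1*p1*p2 + 2*q2*p1*p3 + q1^2*p2^2 + (q2^2 - q1*q3)*p3^2
      + 2*(q1*q2 - q3)*p2*p3
      + q1^4*q3 - 3*q1^2*q2*q3 + 2*q1*q3^2 + q2^2*q3 + c*q3) :
    ∀ q1 q2 q3 p1 p2 p3 : ℝ,
      pbracket h1 h2 q1 q2 q3 p1 p2 p3 = 0 ∧
      pbracket h1 h3 q1 q2 q3 p1 p2 p3 = 0 ∧
      pbracket h2 h3 q1 q2 q3 p1 p2 p3 = 0 := by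
  intro q1 q2 q3 p1 p2 p3
  have dQ1h1 : dQ1 h1 q1 q2 q3 p1 p2 p3 = (c + 2*p2*p3 + 3*q2^2 + 6*q1*q3 + -12*q1^2*q2 + 5*q1^4) := by
    rw [dQ1, dp5 _ (p2^2 + 2*p1*p3 + q2*p3^2 + -2*q2*q3) (c + 2*p2*p3 + 3*q2^2) (3*q3) (-4*q2) (0:ℝ) (1) q1 (by funext t; rw [hh1]; ring)]; ring
  have dQ2h1 : dQ2 h1 q1 q2 q3 p1 p2 p3 = (p3^2 + -2*q3 + 6*q1*q2 + -4*q1^3) := by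
    rw [dQ2, dp5 _ (p2^2 + 2*p1*p3 + q1*c + 2*q1*p2*p3 + 3*q1^2*q3 + q1^5) (p3^2 + -2*q3 + -4*q1^3) (3*q1) (0:ℝ) (0:ℝ) (0:ℝ) q2 (by funext t; rw [hh1]; ring)]; ring
  have dQ3h1 : dQ3 h1 q1 q2 q3 p1 p2 p3 = (-2*q2 + 3*q1^2) := by
    rw [dQ3, dp5 _ (p2^2 + 2*p1*p3 + q2*p3^2 + q1*c + 2*q1*p2*p3 + 3*q1*q2^2 + -4*q1^3*q2 + q1^5) (-2*q2 + 3*q1^2) (0:ℝ) (0:ℝ) (0:ℝ) (0:ℝ) q3 (by funext t; rw [hh1]; ring)]; ring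
  have dP1h1 : dP1 h1 q1 q2 q3 p1 p2 p3 = (2*p3) := by
    rw [dP1, dp5 _ (p2^2 + q2*p3^2 + -2*q2*q3 + q1*c + 2*q1*p2*p3 + 3*q1*q2^2 + 3*q1^2*q3 + -4*q1^3*q2 + q1^5) (2*p3) (0:ℝ) (0:ℝ) (0:ℝ) (0:ℝ) p1 (by funext t; rw [hh1]; ring)]; ring
  have dP2h1 : dP2 h1 q1 q2 q3 p1 p2 p3 = (2*p2 + 2*q1*p3) := by
    rw [dP2, dp5 _ (2*p1*p3 + q2*p3^2 + -2*q2*q3 + q1*c + 3*q1*q2^2 + 3*q1^2*q3 + -4*q1^3*q2 + q1^5) (2*q1*p3) (1) (0:ℝ) (0:ℝ) (0:ℝ) p2 (by funext t; rw [hh1]; ring)]; ring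
  have dP3h1 : dP3 h1 q1 q2 q3 p1 p2 p3 = (2*p1 + 2*q2*p3 + 2*q1*p2) := by
    rw [dP3, dp5 _ (p2^2 + -2*q2*q3 + q1*c + 3*q1*q2^2 + 3*q1^2*q3 + -4*q1^3*q2 + q1^5) (2*p1 + 2*q1*p2) (q2) (0:ℝ) (0:ℝ) (0:ℝ) p3 (by funext t; rw [hh1]; ring)]; ring
  have dQ1h2 : dQ1 h2 q1 q2 q3 p1 p2 p3 = (2*p2^2 + 2*p1*p3 + q2*p3^2 + 4*q2*q3 + 4*q1*p2*p3 + -6*q1*q2^2 + -3*q1^2*q3 + 4*q1^3*q2) := by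
    rw [dQ1, dp5 _ (2*p1*p2 + -1*q3*p3^2 + -1*q3^2 + q2*c + q2^3) (2*p2^2 + 2*p1*p3 + q2*p3^2 + 4*q2*q3) (2*p2*p3 + -3*q2^2) (-1*q3) (q2) (0:ℝ) q1 (by funext t; rw [hh2]; ring)]; ring
  have dQ2h2 : dQ2 h2 q1 q2 q3 p1 p2 p3 = (c + 3*q2^2 + q1*p3^2 + 4*q1*q3 + -6*q1^2*q2 + q1^4) := by
    rw [dQ2, dp5 _ (2*p1*p2 + -1*q3*p3^2 + -1*q3^2 + 2*q1*p2^2 + 2*q1*p1*p3 + 2*q1^2*p2*p3 + -1*q1^3*q3) (c + q1*p3^2 + 4*q1*q3 + q1^4) (-3*q1^2) (1) (0:ℝ) (0:ℝ) q2 (by funext t; rw [hh2]; ring)]; ring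
  have dQ3h2 : dQ3 h2 q1 q2 q3 p1 p2 p3 = (-1*p3^2 + -2*q3 + 4*q1*q2 + -1*q1^3) := by
    rw [dQ3, dp5 _ (2*p1*p2 + q2*c + q2^3 + 2*q1*p2^2 + 2*q1*p1*p3 + q1*q2*p3^2 + 2*q1^2*p2*p3 + -3*q1^2*q2^2 + q1^4*q2) (-1*p3^2 + 4*q1*q2 + -1*q1^3) (-1) (0:ℝ) (0:ℝ) (0:ℝ) q3 (by funext t; rw [hh2]; ring)]; ring
  have dP1h2 : dP1 h2 q1 q2 q3 p1 p2 p3 = (2*p2 + 2*q1*p3) := by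
    rw [dP1, dp5 _ (-1*q3*p3^2 + -1*q3^2 + q2*c + q2^3 + 2*q1*p2^2 + q1*q2*p3^2 + 4*q1*q2*q3 + 2*q1^2*p2*p3 + -3*q1^2*q2^2 + -1*q1^3*q3 + q1^4*q2) (2*p2 + 2*q1*p3) (0:ℝ) (0:ℝ) (0:ℝ) (0:ℝ) p1 (by funext t; rw [hh2]; ring)]; ring
  have dP2h2 : dP2 h2 q1 q2 q3 p1 p2 p3 = (2*p1 + 4*q1*p2 + 2*q1^2*p3) := by
    rw [dP2, dp5 _ (-1*q3*p3^2 + -1*q3^2 + q2*c + q2^3 + 2*q1*p1*p3 + q1*q2*p3^2 + 4*q1*q2*q3 + -3*q1^2*q2^2 + -1*q1^3*q3 + q1^4*q2) (2*p1 + 2*q1^2*p3) (2*q1) (0:ℝ) (0:ℝ) (0:ℝ) p2 (by funext t; rw [hh2]; ring)]; ring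
  have dP3h2 : dP3 h2 q1 q2 q3 p1 p2 p3 = (-2*q3*p3 + 2*q1*p1 + 2*q1*q2*p3 + 2*q1^2*p2) := by
    rw [dP3, dp5 _ (2*p1*p2 + -1*q3^2 + q2*c + q2^3 + 2*q1*p2^2 + 4*q1*q2*q3 + -3*q1^2*q2^2 + -1*q1^3*q3 + q1^4*q2) (2*q1*p1 + 2*q1^2*p2) (-1*q3 + q1*q2) (0:ℝ) (0:ℝ) (0:ℝ) p3 (by funext t; rw [hh2]; ring)]; ring
  have dQ1h3 : dQ1 h3 q1 q2 q3 p1 p2 p3 = (2*p1*p2 + -1*q3*p3^2 + 2*q3^2 + 2*q2*p2*p3 + 2*q1*p2^2 + -6*q1*q2*q3 + 4*q1^3*q3) := by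
    rw [dQ1, dp5 _ (p1^2 + q3*c + -2*q3*p2*p3 + 2*q2*p1*p3 + q2^2*p3^2 + q2^2*q3) (2*p1*p2 + -1*q3*p3^2 + 2*q3^2 + 2*q2*p2*p3) (p2^2 + -3*q2*q3) (0:ℝ) (q3) (0:ℝ) q1 (by funext t; rw [hh3]; ring)]; ring
  have dQ2h3 : dQ2 h3 q1 q2 q3 p1 p2 p3 = (2*p1*p3 + 2*q2*p3^2 + 2*q2*q3 + 2*q1*p2*p3 + -3*q1^2*q3) := by
    rw [dQ2, dp5 _ (p1^2 + q3*c + -2*q3*p2*p3 + 2*q1*p1*p2 + -1*q1*q3*p3^2 + 2*q1*q3^2 + q1^2*p2^2 + q1^4*q3) (2*p1*p3 + 2*q1*p2*p3 + -3*q1^2*q3) (p3^2 + q3) (0:ℝ) (0:ℝ) (0:ℝ) q2 (by funext t; rw [hh3]; ring)]; ring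
  have dQ3h3 : dQ3 h3 q1 q2 q3 p1 p2 p3 = (c + -2*p2*p3 + q2^2 + -1*q1*p3^2 + 4*q1*q3 + -3*q1^2*q2 + q1^4) := by
    rw [dQ3, dp5 _ (p1^2 + 2*q2*p1*p3 + q2^2*p3^2 + 2*q1*p1*p2 + 2*q1*q2*p2*p3 + q1^2*p2^2) (c + -2*p2*p3 + q2^2 + -1*q1*p3^2 + -3*q1^2*q2 + q1^4) (2*q1) (0:ℝ) (0:ℝ) (0:ℝ) q3 (by funext t; rw [hh3]; ring)]; ring
  have dP1h3 : dP1 h3 q1 q2 q3 p1 p2 p3 = (2*p1 + 2*q2*p3 + 2*q1*p2) := by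
    rw [dP1, dp5 _ (q3*c + -2*q3*p2*p3 + q2^2*p3^2 + q2^2*q3 + -1*q1*q3*p3^2 + 2*q1*q3^2 + 2*q1*q2*p2*p3 + q1^2*p2^2 + -3*q1^2*q2*q3 + q1^4*q3) (2*q2*p3 + 2*q1*p2) (1) (0:ℝ) (0:ℝ) (0:ℝ) p1 (by funext t; rw [hh3]; ring)]; ring
  have dP2h3 : dP2 h3 q1 q2 q3 p1 p2 p3 = (-2*q3*p3 + 2*q1*p1 + 2*q1*q2*p3 + 2*q1^2*p2) := by
    rw [dP2, dp5 _ (p1^2 + q3*c + 2*q2*p1*p3 + q2^2*p3^2 + q2^2*q3 + -1*q1*q3*p3^2 + 2*q1*q3^2 + -3*q1^2*q2*q3 + q1^4*q3) (-2*q3*p3 + 2*q1*p1 + 2*q1*q2*p3) (q1^2) (0:ℝ) (0:ℝ) (0:ℝ) p2 (by funext t; rw [hh3]; ring)]; ring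
  have dP3h3 : dP3 h3 q1 q2 q3 p1 p2 p3 = (-2*q3*p2 + 2*q2*p1 + 2*q2^2*p3 + -2*q1*q3*p3 + 2*q1*q2*p2) := by
    rw [dP3, dp5 _ (p1^2 + q3*c + q2^2*q3 + 2*q1*p1*p2 + 2*q1*q3^2 + q1^2*p2^2 + -3*q1^2*q2*q3 + q1^4*q3) (-2*q3*p2 + 2*q2*p1 + 2*q1*q2*p2) (q2^2 + -1*q1*q3) (0:ℝ) (0:ℝ) (0:ℝ) p3 (by funext t; rw [hh3]; ring)]; ring

  refine ⟨?_, ?_, ?_⟩ <;>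
    rw [pbracket] <;>
    simp only [dQ1h1, dQ2h1, dQ3h1, dP1h1, dP2h1, dP3h1,
      dQ1h2, dQ2h2, dQ3h2, dP1h2, dP2h2, dP3h2,
      dQ1h3, dQ2h3, dQ3h3, dP1h3, dP2h3, dP3h3] <;>
    ring
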